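/- Let \varphi(z) = az + b with 0 < |a| < 1 - |b| (so \|\varphi\|_\infty < 1), and suppose \lambda \neq 0 and f is analytic on the unit disk with f'(az + b) = \lambda f(z) for all z in the disk. Then f = 0; i.e., D_\varphi has no nonzero eigenvalues, and its spectrum on S^p is {0}. -/

import Mathlib

open Metric

/-- For `φ(z) = az + b` with `0 < |a| < 1 - |b|`: if `λ ≠ 0` and `f` is analytic on the
unit disk with `f'(az+b) = λ f(z)` on the disk, then `f = 0`; i.e. `D_φ` has no nonzero
eigenvalues (so its spectrum on `S^p` is `{0}`). -/
theorem stmt18 (a b : ℂ) (ha0 : 0 < ‖a‖) (hab : ‖a‖ < 1 - ‖b‖)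
    (lam : ℂ) (hlam : lam ≠ 0) (f : ℂ → ℂ)
    (hf : DifferentiableOn ℂ f (ball 0 1))
    (heig : ∀ z ∈ ball (0 : ℂ) 1, deriv f (a * z + b) = lam * f z) :
    ∀ z ∈ ball (0 : ℂ) 1, f z = 0 := by
  have hb0 : (0:ℝ) ≤ ‖b‖ := norm_nonneg b
  have ha1 : ‖a‖ < 1 := by linarith
  have h1a : (1 : ℂ) - a ≠ 0 := by
    intro h
    have : a = 1 := by linear_combination -h
    rw [this] at ha1; simp at ha1
  set p : ℂ := b / (1 - a) with hp_def
  have hp_fix : a * p + b = p := by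
    rw [hp_def]; field_simp; ring
  have hp_norm : ‖p‖ < 1 := by
    have h1 : 1 - ‖a‖ ≤ ‖1 - a‖ := by
      have := norm_sub_norm_le (1:ℂ) a
      simpa using this
    have h1pos : (0:ℝ) < ‖1 - a‖ := by linarith
    rw [hp_def, norm_div, div_lt_one h1pos]
    linarith
  have hp_mem : p ∈ ball (0:ℂ) 1 := by
    simpa [mem_ball, dist_zero_right] using hp_norm
  have hmaps : ∀ z ∈ ball (0:ℂ) 1, a * z + b ∈ ball (0:ℂ) 1 := by
    intro z hz
    rw [mem_ball_zero_iff] at hz ⊢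
    calc ‖a * z + b‖ ≤ ‖a‖ * ‖z‖ + ‖b‖ := by
            simpa [norm_mul] using norm_add_le (a*z) b
      _ < 1 := by nlinarith
  have hA : AnalyticOnNhd ℂ f (ball 0 1) := hf.analyticOnNhd isOpen_ball
  have hAn : ∀ n, AnalyticOnNhd ℂ (iteratedDeriv n f) (ball (0:ℂ) 1) := by
    intro n; rw [iteratedDeriv_eq_iterate]; exact hA.iterated_deriv n
  -- main inductive identity
  have key : ∀ n, ∀ z ∈ ball (0:ℂ) 1,
      a ^ n * iteratedDeriv (n+1) f (a * z + b) = lam * iteratedDeriv n f z := by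
    intro n
    induction n with
    | zero =>
      intro z hz
      simpa [iteratedDeriv_one, iteratedDeriv_zero] using heig z hz
    | succ n ih =>
      intro z hz
      have hmem : a * z + b ∈ ball (0:ℂ) 1 := hmaps z hz
      have hg0 := ((hAn (n+1)) _ hmem).differentiableAt.hasDerivAt
      rw [← iteratedDeriv_succ] at hg0
      have haff : HasDerivAt (fun w : ℂ => a * w + b) a z := by
        simpa using ((hasDerivAt_id z).const_mul a).add_const b
      have hL : HasDerivAt (fun w => a ^ n * iteratedDeriv (n+1) f (a * w + b))
          (a ^ n * (iteratedDeriv (n+1+1) f (a*z+b) * a)) z :=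
        (hg0.comp z haff).const_mul _
      have hR0 := ((hAn n) _ hz).differentiableAt.hasDerivAt
      rw [← iteratedDeriv_succ] at hR0
      have hR : HasDerivAt (fun w => lam * iteratedDeriv n f w)
          (lam * iteratedDeriv (n+1) f z) z := hR0.const_mul lam
      have heq : (fun w => a ^ n * iteratedDeriv (n+1) f (a * w + b))
          =ᶠ[nhds z] (fun w => lam * iteratedDeriv n f w) := by
        filter_upwards [isOpen_ball.mem_nhds hz] with w hw using ih w hw
      have hder := heq.deriv_eq
      rw [hL.deriv, hR.deriv] at hder
      calc a^(n+1) * iteratedDeriv (n+1+1) f (a*z+b)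
          = a^n * (iteratedDeriv (n+1+1) f (a*z+b) * a) := by ring
        _ = lam * iteratedDeriv (n+1) f z := hder
  have rel : ∀ n, a ^ n * iteratedDeriv (n+1) f p = lam * iteratedDeriv n f p := by
    intro n
    have := key n p hp_mem
    rwa [hp_fix] at this
  have hrel_norm : ∀ n, ‖a‖ ^ n * ‖iteratedDeriv (n+1) f p‖
      = ‖lam‖ * ‖iteratedDeriv n f p‖ := by
    intro n
    have := congrArg norm (rel n)
    simpa [norm_mul, norm_pow] using this
  have hnorm : ∀ n, ‖a‖ ^ (∑ k ∈ Finset.range n, k) * ‖iteratedDeriv n f p‖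
      = ‖lam‖ ^ n * ‖f p‖ := by
    intro n
    induction n with
    | zero => simp
    | succ n ih =>
      rw [Finset.sum_range_succ, pow_add]
      calc ‖a‖ ^ (∑ k ∈ Finset.range n, k) * ‖a‖ ^ n * ‖iteratedDeriv (n+1) f p‖
          = ‖a‖ ^ (∑ k ∈ Finset.range n, k) * (‖a‖ ^ n * ‖iteratedDeriv (n+1) f p‖) := by
            ring
        _ = ‖a‖ ^ (∑ k ∈ Finset.range n, k) * (‖lam‖ * ‖iteratedDeriv n f p‖) := by
            rw [hrel_norm]
        _ = ‖lam‖ * (‖a‖ ^ (∑ k ∈ Finset.range n, k) * ‖iteratedDeriv n f p‖) := by ring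
        _ = ‖lam‖ * (‖lam‖ ^ n * ‖f p‖) := by rw [ih]
        _ = ‖lam‖ ^ (n+1) * ‖f p‖ := by ring
  -- geometry for Taylor expansion at p
  set ρ : ℝ := (1 - ‖p‖)/2 with hρ_def
  have hρ : 0 < ρ := by rw [hρ_def]; linarith
  have hρlt : ρ < 1 - ‖p‖ := by rw [hρ_def]; linarith
  have hsub : ball p (1 - ‖p‖) ⊆ ball (0:ℂ) 1 := by
    intro w hw
    rw [mem_ball_iff_norm] at hw
    rw [mem_ball_zero_iff]
    calc ‖w‖ = ‖(w - p) + p‖ := by ring_nf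
      _ ≤ ‖w - p‖ + ‖p‖ := norm_add_le _ _
      _ < (1 - ‖p‖) + ‖p‖ := by linarith
      _ = 1 := by ring
  have hz₀ : p + (ρ:ℂ) ∈ ball p (1 - ‖p‖) := by
    rw [mem_ball_iff_norm]
    simp only [add_sub_cancel_left]
    rw [Complex.norm_real, Real.norm_eq_abs, abs_of_pos hρ]
    exact hρlt
  have hdiff : DifferentiableOn ℂ f (ball p (1 - ‖p‖)) := hf.mono hsub
  -- f p = 0
  have hfp : f p = 0 := by
    by_contra hfp
    have hfp' : 0 < ‖f p‖ := norm_pos_iff.mpr hfp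
    have hL0 : 0 < ‖lam‖ := norm_pos_iff.mpr hlam
    have hcpos : ∀ n, 0 < ‖iteratedDeriv n f p‖ := by
      intro n
      rcases lt_or_eq_of_le (norm_nonneg (iteratedDeriv n f p)) with h | h
      · exact h
      · exfalso
        have := hnorm n
        rw [← h, mul_zero] at this
        have : (0:ℝ) < ‖lam‖ ^ n * ‖f p‖ := by positivity
        linarith [hnorm n, (hnorm n).symm ▸ this]
    set x : ℕ → ℝ := fun n => ‖iteratedDeriv n f p‖ * ρ^n / (n.factorial : ℝ) with hx_def
    have hxpos : ∀ n, 0 < x n := by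
      intro n
      have := hcpos n
      have hfac : (0:ℝ) < n.factorial := by exact_mod_cast Nat.factorial_pos n
      positivity
    have hstep : ∀ n : ℕ, ‖a‖^n * ((n:ℝ)+1) * x (n+1) = (‖lam‖ * ρ) * x n := by
      intro n
      have h1 := hrel_norm n
      have hn1 : ((n:ℝ)+1) ≠ 0 := by positivity
      have hfac : ((n.factorial : ℝ)) ≠ 0 := by exact_mod_cast Nat.factorial_ne_zero n
      have e : ∀ m : ℕ, x m = ‖iteratedDeriv m f p‖ * ρ^m / (m.factorial : ℝ) := fun m => rfl
      rw [e, e, Nat.factorial_succ, pow_succ]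
      push_cast
      field_simp
      linear_combination h1
    -- Taylor series terms tend to zero
    have hsum := Complex.hasSum_taylorSeries_on_ball hdiff hz₀
    have hterm := hsum.summable.tendsto_atTop_zero
    have hsmall : ∀ᶠ n in Filter.atTop, x n < 1 := by
      filter_upwards [hterm (Metric.ball_mem_nhds (0:ℂ) one_pos)] with n hn
      have hn' : ‖(n.factorial : ℂ)⁻¹ • (p + (ρ:ℂ) - p)^n • iteratedDeriv n f p‖ < 1 := by
        simpa [mem_ball_zero_iff] using hn
      have heqn : ‖(n.factorial : ℂ)⁻¹ • (p + (ρ:ℂ) - p)^n • iteratedDeriv n f p‖ = x n := by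
        rw [add_sub_cancel_left, norm_smul, norm_smul, norm_inv, norm_pow,
          Complex.norm_natCast, Complex.norm_real, Real.norm_eq_abs, abs_of_pos hρ,
          hx_def]
        field_simp
      rwa [heqn] at hn'
    -- (n+1) * ‖a‖^n → 0
    have htend : Filter.Tendsto (fun n : ℕ => ((n:ℝ)+1) * ‖a‖^n) Filter.atTop (nhds 0) := by
      have h1 : Filter.Tendsto (fun n : ℕ => (n:ℝ)^1 * ‖a‖^n) Filter.atTop (nhds 0) :=
        (summable_pow_mul_geometric_of_norm_lt_one 1
          (r := ‖a‖) (by simpa using ha1)).tendsto_atTop_zero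
      have h2 : Filter.Tendsto (fun n : ℕ => ‖a‖^n) Filter.atTop (nhds 0) :=
        tendsto_pow_atTop_nhds_zero_of_lt_one (norm_nonneg a) ha1
      have := h1.add h2
      rw [add_zero] at this
      refine this.congr (fun n => by ring)
    have hev : ∀ᶠ n : ℕ in Filter.atTop, ((n:ℝ)+1) * ‖a‖^n < ‖lam‖ * ρ / 2 :=
      Filter.Tendsto.eventually_lt_const
        (by nlinarith [mul_pos hL0 hρ] : (0:ℝ) < ‖lam‖ * ρ / 2) htend
    obtain ⟨N, hN⟩ := Filter.eventually_atTop.mp (hev.and hsmall)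
    have hdouble : ∀ n, N ≤ n → 2 * x n ≤ x (n+1) := by
      intro n hn
      have h1 := (hN n hn).1
      have h2 := hstep n
      have h3 := hxpos n
      have h4 := hxpos (n+1)
      have h5 : (0:ℝ) ≤ ‖a‖^n * ((n:ℝ)+1) := by positivity
      nlinarith
    have hgrow : ∀ k, 2^k * x N ≤ x (N + k) := by
      intro k
      induction k with
      | zero => simp
      | succ k ih =>
        have := hdouble (N + k) (Nat.le_add_right N k)
        calc 2^(k+1) * x N = 2 * (2^k * x N) := by ring
          _ ≤ 2 * x (N + k) := by linarith [hxpos (N+k), ih]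
          _ ≤ x (N + k + 1) := this
    obtain ⟨k, hk⟩ := pow_unbounded_of_one_lt (1 / x N) (one_lt_two (α := ℝ))
    have hk' : 1 < 2^k * x N := by
      rw [div_lt_iff₀ (hxpos N)] at hk
      linarith
    have := hgrow k
    have hlt := (hN (N + k) (Nat.le_add_right N k)).2
    linarith
  -- all derivatives vanish at p
  have hczero : ∀ n, iteratedDeriv n f p = 0 := by
    intro n
    have := hnorm n
    rw [hfp, norm_zero, mul_zero] at this
    have hane : ‖a‖ ^ (∑ k ∈ Finset.range n, k) ≠ 0 := by positivity
    have := mul_eq_zero.mp this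
    rcases this with h | h
    · exact absurd h hane
    · exact norm_eq_zero.mp h
  -- f vanishes near p
  have hzero_ball : ∀ w ∈ ball p (1 - ‖p‖), f w = 0 := by
    intro w hw
    have := Complex.taylorSeries_eq_on_ball' hw hdiff
    rw [← this]
    simp [hczero]
  have hEq : Set.EqOn f 0 (ball (0:ℂ) 1) := by
    refine hA.eqOn_zero_of_preconnected_of_eventuallyEq_zero
      ((convex_ball (0:ℂ) 1).isPreconnected) hp_mem ?_
    have hpm : p ∈ ball p (1 - ‖p‖) := mem_ball_self (by linarith)
    filter_upwards [isOpen_ball.mem_nhds hpm] with w hw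
    exact hzero_ball w hw
  intro z hz
  exact hEq hz
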